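/- arXiv:1101.0449 — 4 statements merged into one kernel-verified Lean document; each statement's English description precedes it below -/
import Mathlib

section
/- Let h : ℝ → ℝ be continuously differentiable on [0,∞) with h' > 0 on [0,∞), let b* ∈ [0,∞) satisfy h'(b*) ≤ h'(u) for all u ≥ 0, suppose h' is nondecreasing on [b*,∞), and suppose h(b*) ≥ 0. Then for every x > b*, x − b* + h(b*)/h'(b*) ≥ h(x)/h'(x); that is, V_{b*}(x) ≥ V_x(x). -/
open Set

/-- The barrier value function `V_b`: `V_b x = 0` for `x < 0`,
`V_b x = h x / h' b` for `0 ≤ x ≤ b`, and `V_b x = x - b + h b / h' b` for `x > b`.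
In particular `V_x x = h x / h' x` and `V_{b*} x = x - b* + h b* / h' b*` for `x > b*`. -/
noncomputable def barrierValue (h h' : ℝ → ℝ) (b : ℝ) (x : ℝ) : ℝ :=
  if x < 0 then 0 else if x ≤ b then h x / h' b else x - b + h b / h' b

/-- If `h` is continuously differentiable on `[0,∞)` with `h' > 0` there,
`b* ∈ [0,∞)` satisfies `h' b* ≤ h' u` for all `u ≥ 0`, `h'` is nondecreasing on
`[b*,∞)`, and `h b* ≥ 0`, then for every `x > b*` one has
`x - b* + h b* / h' b* ≥ h x / h' x`, that is, `V_{b*} x ≥ V_x x`. -/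
theorem barrier_value_dominates
    (h h' : ℝ → ℝ)
    (hderiv : ∀ u ∈ Ici (0 : ℝ), HasDerivWithinAt h (h' u) (Ici 0) u)
    (hcont : ContinuousOn h' (Ici 0))
    (hpos : ∀ u ∈ Ici (0 : ℝ), 0 < h' u)
    (bstar : ℝ) (hb : 0 ≤ bstar)
    (hmin : ∀ u ≥ (0 : ℝ), h' bstar ≤ h' u)
    (hmono : MonotoneOn h' (Ici bstar))
    (hnonneg : 0 ≤ h bstar) :
    ∀ x > bstar, h x / h' x ≤ x - bstar + h bstar / h' bstar ∧
      barrierValue h h' x x ≤ barrierValue h h' bstar x := by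

  intro x hx
  have hx0 : (0:ℝ) ≤ x := le_trans hb hx.le
  have hbpos := hpos bstar (mem_Ici.mpr hb)
  have hxpos := hpos x (mem_Ici.mpr hx0)
  have hbx : h' bstar ≤ h' x := hmin x hx0
  have hsub : Icc bstar x ⊆ Ici (0:ℝ) := fun u hu => le_trans hb hu.1
  have hcontOn : ContinuousOn h (Icc bstar x) := fun u hu =>
    ((hderiv u (hsub hu)).continuousWithinAt).mono hsub
  have hderiv' : ∀ u ∈ interior (Icc bstar x), deriv h u ≤ h' x := by
    intro u hu
    rw [interior_Icc] at hu
    have hu0 : (0:ℝ) < u := lt_of_le_of_lt hb hu.1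
    have : HasDerivAt h (h' u) u :=
      (hderiv u hu0.le).hasDerivAt (Ici_mem_nhds hu0)
    rw [this.deriv]
    exact hmono hu.1.le (le_of_lt hx : bstar ≤ x) hu.2.le
  have hdiff : DifferentiableOn ℝ h (interior (Icc bstar x)) := by
    intro u hu
    rw [interior_Icc] at hu
    have hu0 : (0:ℝ) < u := lt_of_le_of_lt hb hu.1
    exact (((hderiv u hu0.le).hasDerivAt (Ici_mem_nhds hu0)).differentiableAt).differentiableWithinAt
  have key : h x - h bstar ≤ h' x * (x - bstar) :=
    (convex_Icc bstar x).image_sub_le_mul_sub_of_deriv_le hcontOn hdiff hderiv'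
      bstar (Set.mem_Icc.mpr ⟨le_refl _, hx.le⟩) x (Set.mem_Icc.mpr ⟨hx.le, le_refl _⟩) hx.le
  have hK : h bstar ≤ (h bstar / h' bstar) * h' x := by
    rw [div_mul_eq_mul_div, le_div_iff₀ hbpos]
    nlinarith
  have main : h x / h' x ≤ x - bstar + h bstar / h' bstar := by
    rw [div_le_iff₀ hxpos]
    nlinarith
  refine ⟨main, ?_⟩
  have hxb : ¬ x ≤ bstar := not_le.mpr hx
  simp only [barrierValue, if_neg (not_lt.mpr hx0), if_pos (le_refl x), if_neg hxb]
  exact main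
end

section
/- Let h : ℝ → ℝ be differentiable on (0,∞) with h' > 0, suppose h' is convex on (0,∞), and let b* ∈ (0,∞) satisfy h'(b*) ≤ h'(x) for all x > 0. Then the barrier value function V_{b*} (equal to h(x)/h'(b*) on (0,b*] and to x − b* + h(b*)/h'(b*) on (b*,∞)) is concave on (0,∞). -/
open Set

/-- If `h` is differentiable on `(0,∞)` with `h' > 0` there, `h'` is
convex on `(0,∞)`, and `b* ∈ (0,∞)` satisfies `h' b* ≤ h' x` for all `x > 0`, then
the barrier value function `V_{b*}` (equal to `h x / h' b*` on `(0, b*]` and to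
`x - b* + h b* / h' b*` on `(b*, ∞)`) is concave on `(0,∞)`. -/
theorem barrier_value_concave
    (h h' : ℝ → ℝ)
    (hderiv : ∀ x ∈ Ioi (0 : ℝ), HasDerivAt h (h' x) x)
    (hpos : ∀ x ∈ Ioi (0 : ℝ), 0 < h' x)
    (hconv : ConvexOn ℝ (Ioi 0) h')
    (bstar : ℝ) (hb : 0 < bstar)
    (hmin : ∀ x > (0 : ℝ), h' bstar ≤ h' x) :
    ConcaveOn ℝ (Ioi 0) (barrierValue h h' bstar) := by
  set c := h' bstar with hc_def
  have hc : 0 < c := hpos bstar hb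
  set V := barrierValue h h' bstar with hV_def
  set g : ℝ → ℝ := fun x => if x ≤ bstar then h' x / c else 1 with hg_def
  -- the linear piece
  set L : ℝ → ℝ := fun x => x - bstar + h bstar / c with hL_def
  have hVL : ∀ y ∈ Ici bstar, V y = L y := by
    intro y hy
    rcases eq_or_lt_of_le (mem_Ici.mp hy) with heq | hlt
    · simp [hV_def, barrierValue, ← heq, not_lt.mpr hb.le, hL_def, hc_def]
    · simp [hV_def, barrierValue, not_lt.mpr (hb.trans hlt).le, not_le.mpr hlt, hL_def, hc_def]
  have hVh : ∀ y ∈ Ioc 0 bstar, V y = h y / c := by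
    intro y hy
    simp [hV_def, barrierValue, not_lt.mpr hy.1.le, hy.2, hc_def]
  have hLderiv : ∀ x : ℝ, HasDerivAt L 1 x := by
    intro x
    simpa [hL_def] using ((hasDerivAt_id x).sub_const bstar).add_const (h bstar / c)
  -- V has derivative g x at each x > 0
  have hVderiv : ∀ x ∈ Ioi (0 : ℝ), HasDerivAt V (g x) x := by
    intro x hx
    rcases lt_trichotomy x bstar with hlt | heq | hgt
    · -- x < bstar
      have hd : HasDerivAt (fun y => h y / c) (h' x / c) x :=
        (hderiv x hx).div_const c
      have hmem : Ioo (0 : ℝ) bstar ∈ nhds x := Ioo_mem_nhds hx hlt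
      have hev : V =ᶠ[nhds x] fun y => h y / c := by
        filter_upwards [hmem] with y hy
        exact hVh y ⟨hy.1, hy.2.le⟩
      have := hd.congr_of_eventuallyEq hev
      simpa [hg_def, hlt.le] using this
    · -- x = bstar
      subst heq
      have hleft : HasDerivWithinAt V 1 (Iic x) x := by
        have hd : HasDerivWithinAt (fun y => h y / c) 1 (Iic x) x := by
          have := ((hderiv x hx).div_const c).hasDerivWithinAt (s := Iic x)
          rwa [← hc_def, div_self hc.ne'] at this
        have hev : V =ᶠ[nhdsWithin x (Iic x)] fun y => h y / c := by
          filter_upwards [self_mem_nhdsWithin,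
            nhdsWithin_le_nhds (Ioi_mem_nhds hx)] with y hy1 hy2
          exact hVh y ⟨hy2, hy1⟩
        exact hd.congr_of_eventuallyEq hev (hVh x ⟨hx, le_refl x⟩)
      have hright : HasDerivWithinAt V 1 (Ici x) x := by
        have hd : HasDerivWithinAt L 1 (Ici x) x := (hLderiv x).hasDerivWithinAt
        exact hd.congr hVL (hVL x (self_mem_Ici))
      have := (hleft.union hright)
      rw [Iic_union_Ici, hasDerivWithinAt_univ] at this
      have hgx : g x = 1 := by
        simp [hg_def, ← hc_def, div_self hc.ne']
      rwa [hgx]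
    · -- x > bstar
      have hmem : Ioi bstar ∈ nhds x := Ioi_mem_nhds hgt
      have hev : V =ᶠ[nhds x] L := by
        filter_upwards [hmem] with y hy
        exact hVL y (mem_Ici.mpr (le_of_lt hy))
      have := (hLderiv x).congr_of_eventuallyEq hev
      simpa [hg_def, not_le.mpr hgt] using this
  -- antitonicity of g on (0,∞)
  have hganti : AntitoneOn g (Ioi 0) := by
    intro x hx y hy hxy
    simp only [hg_def]
    by_cases hyb : y ≤ bstar
    · have hxb : x ≤ bstar := hxy.trans hyb
      rw [if_pos hyb, if_pos hxb]
      have hymem : y ∈ segment ℝ x bstar := by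
        rw [segment_eq_Icc hxb]; exact ⟨hxy, hyb⟩
      have := hconv.le_on_segment hx (mem_Ioi.mpr hb) hymem
      rw [max_eq_left (hmin x hx)] at this
      exact div_le_div_of_nonneg_right this hc.le |>.trans_eq rfl
    · rw [if_neg hyb]
      by_cases hxb : x ≤ bstar
      · rw [if_pos hxb]
        rw [one_le_div hc]
        exact hmin x hx
      · rw [if_neg hxb]
  -- conclude
  have hcont : ContinuousOn V (Ioi 0) := fun x hx =>
    (hVderiv x hx).continuousAt.continuousWithinAt
  have hdiff : DifferentiableOn ℝ V (interior (Ioi 0)) := by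
    rw [interior_Ioi]
    exact fun x hx => (hVderiv x hx).differentiableAt.differentiableWithinAt
  refine AntitoneOn.concaveOn_of_deriv (convex_Ioi 0) hcont hdiff ?_
  rw [interior_Ioi]
  intro x hx y hy hxy
  rw [(hVderiv x hx).deriv, (hVderiv y hy).deriv]
  exact hganti hx hy hxy
end

section
/- If g : (0,∞) → [0,∞) is measurable and log-convex on (0,∞), and ∫_x^∞ g(t) dt < ∞ for every x > 0, then the tail function Ḡ(x) = ∫_x^∞ g(t) dt is log-convex on (0,∞). -/
open Set MeasureTheory ENNReal NNReal

/-- A function `f : I → [0,∞)` is log-convex on `s ⊆ ℝ` if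
`f (t·x + (1-t)·y) ≤ f x ^ t * f y ^ (1-t)` for all `x, y ∈ s` and `t ∈ [0,1]`
(real powers). -/
def LogConvexOn (s : Set ℝ) (f : ℝ → ℝ) : Prop :=
  ∀ x ∈ s, ∀ y ∈ s, ∀ t : ℝ, 0 ≤ t → t ≤ 1 →
    f (t * x + (1 - t) * y) ≤ f x ^ t * f y ^ (1 - t)

/-- If `g : (0,∞) → [0,∞)` is measurable and log-convex on `(0,∞)`,
and `∫_x^∞ g(t) dt < ∞` for every `x > 0`, then the tail function
`Ḡ x = ∫_x^∞ g(t) dt` is log-convex on `(0,∞)`. -/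
theorem logConvexOn_tail (g : ℝ → ℝ)
    (hmeas : Measurable g)
    (hnonneg : ∀ x ∈ Ioi (0 : ℝ), 0 ≤ g x)
    (hlc : LogConvexOn (Ioi 0) g)
    (hint : ∀ x ∈ Ioi (0 : ℝ), IntegrableOn g (Ioi x)) :
    LogConvexOn (Ioi 0) (fun x => ∫ t in Ioi x, g t) := by
  intro x hx y hy t ht0 ht1
  set L : ℝ → ℝ≥0∞ := fun a => ∫⁻ s in Ioi a, ENNReal.ofReal (g s) with hL
  have hGL : ∀ a ∈ Ioi (0:ℝ), (∫ s in Ioi a, g s) = (L a).toReal := by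
    intro a ha
    refine integral_eq_lintegral_of_nonneg_ae ?_ (hmeas.aestronglyMeasurable.restrict)
    filter_upwards [ae_restrict_mem measurableSet_Ioi] with s hs
    exact hnonneg s (mem_Ioi.mpr (lt_trans (mem_Ioi.mp ha) (mem_Ioi.mp hs)))
  have hLne : ∀ a ∈ Ioi (0:ℝ), L a ≠ ⊤ := fun a ha => ((hint a ha).lintegral_lt_top).ne
  have hshift : ∀ a : ℝ, L a = ∫⁻ r in Ioi (0:ℝ), ENNReal.ofReal (g (a + r)) := by
    intro a
    have h : (∫⁻ s in Ioi a, ENNReal.ofReal (g s)) =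
        ∫⁻ r in Ioi (0:ℝ), ENNReal.ofReal (g (a + r)) := by
      conv_lhs => rw [← map_add_left_eq_self (volume : Measure ℝ) a]
      rw [setLIntegral_map measurableSet_Ioi hmeas.ennreal_ofReal
        (measurable_const_add a)]
      congr 1
      ext r
      simp
    exact h
  rcases eq_or_lt_of_le ht0 with h0 | ht0'
  · simp [← h0, Real.rpow_zero, Real.rpow_one]
  rcases eq_or_lt_of_le ht1 with h1 | ht1'
  · simp [h1, Real.rpow_zero, Real.rpow_one]
  have h1t : 0 < 1 - t := by linarith
  set z := t * x + (1 - t) * y with hzdef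
  have hz : z ∈ Ioi (0:ℝ) :=
    add_pos (mul_pos ht0' hx) (mul_pos h1t hy)
  set F : ℝ → ℝ≥0∞ := fun r => ENNReal.ofReal (g (x + r)) ^ t with hF
  set G : ℝ → ℝ≥0∞ := fun r => ENNReal.ofReal (g (y + r)) ^ (1 - t) with hG
  have hFm : Measurable F :=
    (ENNReal.measurable_ofReal.comp (hmeas.comp (measurable_const_add x))).pow_const _
  have hGm : Measurable G :=
    (ENNReal.measurable_ofReal.comp (hmeas.comp (measurable_const_add y))).pow_const _
  have hpq : (1/t).HolderConjugate (1/(1-t)) :=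
    ⟨by rw [one_div, inv_inv, one_div, inv_inv]; ring,
     one_div_pos.mpr ht0', one_div_pos.mpr h1t⟩
  have key : L z ≤ L x ^ t * L y ^ (1 - t) := by
    rw [hshift z, hshift x, hshift y]
    calc (∫⁻ r in Ioi (0:ℝ), ENNReal.ofReal (g (z + r)))
        ≤ ∫⁻ r in Ioi (0:ℝ), (F * G) r := by
          refine setLIntegral_mono (hFm.mul hGm) ?_
          intro r hr
          have hxr : x + r ∈ Ioi (0:ℝ) := mem_Ioi.mpr (add_pos hx hr)
          have hyr : y + r ∈ Ioi (0:ℝ) := mem_Ioi.mpr (add_pos hy hr)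
          have heq : z + r = t * (x + r) + (1 - t) * (y + r) := by rw [hzdef]; ring
          have hle := hlc (x + r) hxr (y + r) hyr t ht0 ht1
          rw [heq]
          calc ENNReal.ofReal (g (t * (x + r) + (1 - t) * (y + r)))
              ≤ ENNReal.ofReal (g (x + r) ^ t * g (y + r) ^ (1 - t)) :=
                ENNReal.ofReal_le_ofReal hle
            _ = F r * G r := by
                rw [ENNReal.ofReal_mul (Real.rpow_nonneg (hnonneg _ hxr) t),
                  ← ENNReal.ofReal_rpow_of_nonneg (hnonneg _ hxr) ht0,
                  ← ENNReal.ofReal_rpow_of_nonneg (hnonneg _ hyr) (le_of_lt h1t)]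
            _ = (F * G) r := rfl
      _ ≤ (∫⁻ r in Ioi (0:ℝ), F r ^ (1/t)) ^ (1/(1/t)) *
          (∫⁻ r in Ioi (0:ℝ), G r ^ (1/(1-t))) ^ (1/(1/(1-t))) :=
          ENNReal.lintegral_mul_le_Lp_mul_Lq _ hpq hFm.aemeasurable hGm.aemeasurable
      _ = (∫⁻ r in Ioi (0:ℝ), ENNReal.ofReal (g (x + r))) ^ t *
          (∫⁻ r in Ioi (0:ℝ), ENNReal.ofReal (g (y + r))) ^ (1 - t) := by
          rw [one_div_one_div, one_div_one_div]
          congr 1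
          · congr 1
            refine lintegral_congr fun r => ?_
            rw [hF, ← ENNReal.rpow_mul, mul_one_div_cancel ht0'.ne', ENNReal.rpow_one]
          · congr 1
            refine lintegral_congr fun r => ?_
            rw [hG, ← ENNReal.rpow_mul, mul_one_div_cancel h1t.ne', ENNReal.rpow_one]
  have hfin : L x ^ t * L y ^ (1 - t) ≠ ⊤ :=
    ENNReal.mul_ne_top (ENNReal.rpow_ne_top_of_nonneg ht0 (hLne x hx))
      (ENNReal.rpow_ne_top_of_nonneg (le_of_lt h1t) (hLne y hy))
  calc (∫ s in Ioi z, g s) = (L z).toReal := hGL z hz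
    _ ≤ (L x ^ t * L y ^ (1 - t)).toReal := ENNReal.toReal_mono hfin key
    _ = (L x).toReal ^ t * (L y).toReal ^ (1 - t) := by
        rw [ENNReal.toReal_mul, ENNReal.toReal_rpow, ENNReal.toReal_rpow]
    _ = (∫ s in Ioi x, g s) ^ t * (∫ s in Ioi y, g s) ^ (1 - t) := by
        rw [hGL x hx, hGL y hy]
end

section
/- Let n ≥ 1 and let real numbers satisfy the interlacing condition 0 < R_1 < α_1 < R_2 < α_2 < ⋯ < α_n < R_{n+1}. For j = 1, …, n+1 define A_j = [∏_{k=1}^n (1 − R_j/α_k)] / [∏_{k=1, k≠j}^{n+1} (1 − R_j/R_k)]. Then A_j > 0 for every j, and consequently the function x ↦ ∑_{j=1}^{n+1} A_j e^{−R_j x} is completely monotone on (0,∞). -/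
open Set Finset

/-- A function `f : ℝ → ℝ` is completely monotone on `(0,∞)` if it is infinitely
differentiable there and `(-1)ⁿ f⁽ⁿ⁾(x) ≥ 0` for every `n ≥ 0` and every `x > 0`. -/
def CompletelyMonotoneOn (f : ℝ → ℝ) : Prop :=
  (∀ n : ℕ, ContDiffOn ℝ n f (Ioi 0)) ∧
    ∀ n : ℕ, ∀ x ∈ Ioi (0 : ℝ), 0 ≤ (-1 : ℝ) ^ n * iteratedDerivWithin n f (Ioi 0) x

private lemma iter_exp_sum (N : ℕ) (R : Fin N → ℝ) (m : ℕ) (c : Fin N → ℝ) :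
    iteratedDeriv m (fun x => ∑ j, c j * Real.exp (-(R j) * x)) =
      fun x => ∑ j, c j * (-(R j))^m * Real.exp (-(R j) * x) := by
  induction m generalizing c with
  | zero => simp
  | succ m ih =>
    rw [iteratedDeriv_succ']
    have hd : deriv (fun x => ∑ j, c j * Real.exp (-(R j) * x)) =
        fun x => ∑ j, (c j * (-(R j))) * Real.exp (-(R j) * x) := by
      funext x
      have : HasDerivAt (fun x => ∑ j, c j * Real.exp (-(R j) * x))
          (∑ j, (c j * (-(R j))) * Real.exp (-(R j) * x)) x := by
        apply HasDerivAt.fun_sum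
        intro j _
        have h1 : HasDerivAt (fun x : ℝ => -(R j) * x) (-(R j)) x := by
          simpa using (hasDerivAt_id x).const_mul (-(R j))
        have h2 := (Real.hasDerivAt_exp (-(R j) * x)).comp x h1
        have h3 := h2.const_mul (c j)
        convert h3 using 1
        · rfl
        · rfl
        · ring
      exact this.deriv
    rw [hd, ih]
    funext x
    apply Finset.sum_congr rfl
    intro j _
    ring

/-- Let `n ≥ 1` and suppose the reals interlace:
`0 < R₁ < α₁ < R₂ < α₂ < ⋯ < αₙ < R_{n+1}` (here `R : Fin (n+1) → ℝ` lists
`R₁, …, R_{n+1}` and `α : Fin n → ℝ` lists `α₁, …, αₙ`). For each `j` define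
`A j = (∏ₖ (1 - R j / α k)) / (∏_{k ≠ j} (1 - R j / R k))`. Then `A j > 0` for
every `j`, and consequently `x ↦ ∑ⱼ A j · e^{-R j · x}` is completely monotone on
`(0,∞)`. -/
theorem interlacing_coefficients_pos_and_completelyMonotone
    (n : ℕ) (hn : 1 ≤ n)
    (R : Fin (n + 1) → ℝ) (α : Fin n → ℝ)
    (hR0 : 0 < R 0)
    (hinter : ∀ k : Fin n, R k.castSucc < α k ∧ α k < R k.succ)
    (A : Fin (n + 1) → ℝ)
    (hA : A = fun j =>
      (∏ k : Fin n, (1 - R j / α k)) /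
        (∏ k ∈ Finset.univ.erase j, (1 - R j / R k))) :
    (∀ j, 0 < A j) ∧
    CompletelyMonotoneOn (fun x => ∑ j : Fin (n + 1), A j * Real.exp (-(R j) * x)) := by
  have hRmono : StrictMono R := by
    refine Fin.strictMono_iff_lt_succ.mpr fun k => ?_
    exact (hinter k).1.trans (hinter k).2
  have hRpos : ∀ j, 0 < R j := fun j =>
    hR0.trans_le (hRmono.monotone (Fin.zero_le j))
  have hαpos : ∀ k, 0 < α k := fun k => (hRpos k.castSucc).trans (hinter k).1
  -- positivity of A
  have hApos : ∀ j, 0 < A j := by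
    intro j
    -- rewrite denominator via succAbove
    have hD : ∏ k ∈ Finset.univ.erase j, (1 - R j / R k) =
        ∏ k : Fin n, (1 - R j / R (j.succAbove k)) := by
      symm
      refine (Finset.prod_nbij (fun k => j.succAbove k) ?_ ?_ ?_ ?_)
      · intro k _
        exact Finset.mem_erase.mpr ⟨Fin.succAbove_ne j k, Finset.mem_univ _⟩
      · exact Fin.succAbove_right_injective.injOn
      · intro m hm
        have hm' : m ≠ j := by simpa using hm
        obtain ⟨k, hk⟩ := Fin.exists_succAbove_eq hm'
        exact ⟨k, by simp, hk⟩
      · intro k _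
        rfl
    have hfac : ∀ k : Fin n,
        0 < (1 - R j / α k) * (1 - R j / R (j.succAbove k)) := by
      intro k
      by_cases hkj : k.castSucc < j
      · -- both factors negative
        have hle : k.succ ≤ j := Fin.castSucc_lt_iff_succ_le.mp hkj
        have h1 : α k < R j := (hinter k).2.trans_le (hRmono.monotone hle)
        have h2 : R (j.succAbove k) < R j := by
          rw [Fin.succAbove_of_castSucc_lt _ _ hkj]
          exact hRmono hkj
        have hn1 : 1 - R j / α k < 0 := by
          have := (one_lt_div (hαpos k)).mpr h1
          linarith
        have hn2 : 1 - R j / R (j.succAbove k) < 0 := by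
          have := (one_lt_div (hRpos _)).mpr h2
          linarith
        exact mul_pos_of_neg_of_neg hn1 hn2
      · -- both factors positive
        have hle : j ≤ k.castSucc := le_of_not_gt hkj
        have h1 : R j < α k := (hRmono.monotone hle).trans_lt (hinter k).1
        have h2 : R j < R (j.succAbove k) := by
          rw [Fin.succAbove_of_le_castSucc _ _ hle]
          exact hRmono (hle.trans_lt Fin.castSucc_lt_succ)
        have hp1 : 0 < 1 - R j / α k := by
          have := (div_lt_one (hαpos k)).mpr h1
          linarith
        have hp2 : 0 < 1 - R j / R (j.succAbove k) := by
          have := (div_lt_one (hRpos _)).mpr h2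
          linarith
        exact mul_pos hp1 hp2
    have hND : 0 < (∏ k : Fin n, (1 - R j / α k)) *
        (∏ k ∈ Finset.univ.erase j, (1 - R j / R k)) := by
      rw [hD, ← Finset.prod_mul_distrib]
      exact Finset.prod_pos fun k _ => hfac k
    rw [hA]
    rcases mul_pos_iff.mp hND with ⟨h1, h2⟩ | ⟨h1, h2⟩
    · exact div_pos h1 h2
    · exact div_pos_of_neg_of_neg h1 h2
  refine ⟨hApos, ?_, ?_⟩
  · -- smoothness
    intro m
    apply ContDiff.contDiffOn
    apply ContDiff.sum
    intro j _
    exact contDiff_const.mul (Real.contDiff_exp.comp (contDiff_const.mul contDiff_id))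
  · intro m x hx
    have hW : iteratedDerivWithin m
        (fun x => ∑ j : Fin (n + 1), A j * Real.exp (-(R j) * x)) (Ioi 0) x =
        iteratedDeriv m (fun x => ∑ j : Fin (n + 1), A j * Real.exp (-(R j) * x)) x := by
      rw [iteratedDerivWithin_eq_iteratedFDerivWithin, iteratedDeriv_eq_iteratedFDeriv,
        iteratedFDerivWithin_of_isOpen m isOpen_Ioi hx]
    rw [hW, iter_exp_sum, Finset.mul_sum]
    apply Finset.sum_nonneg
    intro j _
    have : (-1 : ℝ) ^ m * (A j * (-(R j)) ^ m * Real.exp (-(R j) * x)) =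
        A j * (R j) ^ m * Real.exp (-(R j) * x) := by
      rw [← mul_assoc, ← mul_assoc]
      rw [mul_comm ((-1:ℝ)^m) (A j), mul_assoc (A j), ← mul_pow]
      ring_nf
    rw [this]
    exact mul_nonneg (mul_nonneg (hApos j).le (pow_nonneg (hRpos j).le m)) (Real.exp_nonneg _)
end
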